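/- Let K be a field, let A be an n×n alternating matrix over K (i.e. Aᵀ = −A and all diagonal entries are 0), and let k be a natural number. Then rank(A) ≤ 2k if and only if there exist vectors u_1, w_1, ..., u_k, w_k ∈ K^n such that A = Σ_{s=1}^{k} (u_s·w_sᵀ − w_s·u_sᵀ). (Equivalently: a skew-symmetric form has rank ≤ 2k iff, viewed as a point of P(∧²K^n), it lies in the k-chordal locus of the Grassmannian Gr(2,n) of decomposable 2-vectors.) -/

import Mathlib

open Matrix

private lemma vmv_mulVec {K : Type*} [Field K] {n : ℕ} (u w x : Fin n → K) :
    (vecMulVec u w).mulVec x = (w ⬝ᵥ x) • u := by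
  ext i
  simp only [vecMulVec, mulVec, dotProduct, of_apply, Pi.smul_apply, smul_eq_mul,
    Finset.sum_mul]
  exact Finset.sum_congr rfl fun j _ => by ring

private lemma sum_mulVec {K : Type*} [Field K] {n : ℕ} {ι : Type*} (s : Finset ι)
    (M : ι → Matrix (Fin n) (Fin n) K) (x : Fin n → K) :
    (∑ i ∈ s, M i).mulVec x = ∑ i ∈ s, (M i).mulVec x := by
  classical
  induction s using Finset.induction_on with
  | empty => ext i; simp [mulVec, dotProduct]
  | insert _ _ h ih => rw [Finset.sum_insert h, Finset.sum_insert h, add_mulVec, ih]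

private lemma rank_zero_eq {K : Type*} [Field K] {n : ℕ} (A : Matrix (Fin n) (Fin n) K)
    (h : A.rank = 0) : A = 0 := by
  rw [Matrix.rank, Submodule.finrank_eq_zero, LinearMap.range_eq_bot] at h
  ext i j
  have := congrFun (congrFun (congrArg DFunLike.coe h) (Pi.single j 1)) i
  simpa [Matrix.mulVecLin, Matrix.mulVec_single] using this

private lemma key_ind {K : Type*} [Field K] {n : ℕ} : ∀ (k : ℕ) (A : Matrix (Fin n) (Fin n) K),
    Aᵀ = -A → (∀ i, A i i = 0) → A.rank ≤ 2 * k →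
    ∃ u w : Fin k → (Fin n → K),
      A = ∑ s : Fin k, (Matrix.vecMulVec (u s) (w s) - Matrix.vecMulVec (w s) (u s)) := by
  intro k
  induction k with
  | zero =>
    intro A hskew hdiag hr
    refine ⟨0, 0, ?_⟩
    simpa using rank_zero_eq A (Nat.le_zero.mp (by simpa using hr))
  | succ k ih =>
    intro A hskew hdiag hr
    by_cases hA : A = 0
    · exact ⟨0, 0, by simp [hA]⟩
    · -- find a nonzero entry
      have : ∃ i j, A i j ≠ 0 := by
        by_contra h
        push_neg at h
        exact hA (by ext i j; simp [h])
      obtain ⟨i, j, hc⟩ := this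
      set c : K := A i j with hcdef
      have hAskew : ∀ p q, A q p = -A p q := fun p q => by
        have := congrFun (congrFun hskew p) q
        simpa [Matrix.transpose_apply] using this
      set u : Fin n → K := fun l => c⁻¹ * A l j with hu
      set w : Fin n → K := fun l => A l i with hw
      have hui : u i = 1 := by simp [hu, inv_mul_cancel₀ hc]; exact inv_mul_cancel₀ hc
      have huj : u j = 0 := by simp [hu, hdiag j]
      have hwi : w i = 0 := by simp [hw, hdiag i]
      have hwj : w j = -c := by simp [hw, hAskew i j]; exact hcdef.symm
      set M : Matrix (Fin n) (Fin n) K := vecMulVec w u - vecMulVec u w with hM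
      set B : Matrix (Fin n) (Fin n) K := A - M with hB
      have hMapp : ∀ p q, M p q = w p * u q - u p * w q := fun p q => by
        simp [hM, vecMulVec]
      have hBapp : ∀ p q, B p q = A p q - (w p * u q - u p * w q) := fun p q => by
        simp [hB, hMapp]
      -- rows i and j of B vanish
      have hBi : ∀ q, B i q = 0 := fun q => by
        rw [hBapp, hui, hwi, hAskew]; ring
      have hBj : ∀ q, B j q = 0 := fun q => by
        rw [hBapp, huj, hwj, hu]
        have : A j q = -A q j := hAskew q j
        rw [this]; field_simp; ring
      -- B is alternating
      have hBskew : Bᵀ = -B := by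
        ext p q
        simp only [Matrix.transpose_apply, Matrix.neg_apply, hBapp]
        rw [hAskew p q]; ring
      have hBdiag : ∀ p, B p p = 0 := fun p => by
        rw [hBapp, hdiag]; ring
      -- memberships
      have hwmem : w ∈ LinearMap.range A.mulVecLin := by
        refine ⟨Pi.single i 1, ?_⟩
        ext l; simp [hw, Matrix.mulVecLin, Matrix.mulVec_single]
      have humem : u ∈ LinearMap.range A.mulVecLin := by
        refine ⟨Pi.single j c⁻¹, ?_⟩
        ext l
        simp [hu, Matrix.mulVecLin, Matrix.mulVec_single, mul_comm]
      have hMvec : ∀ x, M.mulVec x = (u ⬝ᵥ x) • w - (w ⬝ᵥ x) • u := fun x => by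
        rw [hM, sub_mulVec, vmv_mulVec, vmv_mulVec]
      have hBrange : LinearMap.range B.mulVecLin ≤ LinearMap.range A.mulVecLin := by
        rintro x ⟨y, rfl⟩
        have : B.mulVecLin y = A.mulVec y - ((u ⬝ᵥ y) • w - (w ⬝ᵥ y) • u) := by
          simp only [Matrix.mulVecLin_apply, hB, sub_mulVec, hMvec]
        rw [this]
        exact Submodule.sub_mem _ ⟨y, rfl⟩
          (Submodule.sub_mem _ (Submodule.smul_mem _ _ hwmem) (Submodule.smul_mem _ _ humem))
      -- disjointness
      set S : Submodule K (Fin n → K) := Submodule.span K {u, w} with hS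
      have hdisj : Disjoint (LinearMap.range B.mulVecLin) S := by
        rw [Submodule.disjoint_def]
        rintro x ⟨y, rfl⟩ hx
        obtain ⟨a, b, hab⟩ := Submodule.mem_span_pair.mp hx
        have hxi : B.mulVecLin y i = 0 := by
          simp [Matrix.mulVecLin_apply, Matrix.mulVec, dotProduct, hBi]
        have hxj : B.mulVecLin y j = 0 := by
          simp [Matrix.mulVecLin_apply, Matrix.mulVec, dotProduct, hBj]
        have ha : a = 0 := by
          have := congrFun hab i
          simpa [hui, hwi, hxi] using this
        have hb : b = 0 := by
          have h2 := congrFun hab j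
          simp only [Pi.add_apply, Pi.smul_apply, smul_eq_mul, huj, hwj, mul_zero,
            zero_add, hxj] at h2
          rcases mul_eq_zero.mp h2 with h | h
          · exact h
          · exact absurd (neg_eq_zero.mp h) hc
        rw [← hab, ha, hb]; simp
      -- span has dimension 2
      have hindep : LinearIndependent K ![u, w] := by
        rw [LinearIndependent.pair_iff]
        intro s t hst
        constructor
        · have := congrFun hst i
          simpa [hui, hwi] using this
        · have := congrFun hst j
          rw [Pi.add_apply] at this
          simp only [Pi.smul_apply, smul_eq_mul, huj, hwj, mul_zero, zero_add,
            Pi.zero_apply] at this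
          rcases mul_eq_zero.mp this with h | h
          · exact h
          · exact absurd (neg_eq_zero.mp h) hc
      have hSrange : Set.range ![u, w] = ({u, w} : Set (Fin n → K)) := by
        ext x
        constructor
        · rintro ⟨l, rfl⟩
          fin_cases l <;> simp
        · rintro (rfl | rfl)
          · exact ⟨0, rfl⟩
          · exact ⟨1, rfl⟩
      have hSdim : Module.finrank K S = 2 := by
        rw [hS, ← hSrange, finrank_span_eq_card hindep]
        simp
      -- rank inequality
      have hsum := Submodule.finrank_sup_add_finrank_inf_eq (LinearMap.range B.mulVecLin) S
      rw [hdisj.eq_bot, finrank_bot, add_zero, hSdim] at hsum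
      have hsup : LinearMap.range B.mulVecLin ⊔ S ≤ LinearMap.range A.mulVecLin := by
        refine sup_le hBrange ?_
        rw [hS, Submodule.span_le]
        rintro x (rfl | rfl)
        · exact humem
        · exact hwmem
      have hrB : B.rank + 2 ≤ A.rank := by
        rw [Matrix.rank, Matrix.rank, ← hsum]
        exact Submodule.finrank_mono hsup
      have hrB' : B.rank ≤ 2 * k := by omega
      obtain ⟨u', w', hBsum⟩ := ih B hBskew hBdiag hrB'
      refine ⟨Fin.cons w u', Fin.cons u w', ?_⟩
      rw [Fin.sum_univ_succ]
      simp only [Fin.cons_zero, Fin.cons_succ]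
      rw [← hBsum]
      rw [hB, hM]
      abel

/-- An alternating `n×n` matrix over a field has rank at most `2k` if and only if
it is a sum of `k` elementary alternating matrices `u·wᵀ − w·uᵀ`, i.e. iff, viewed
as a 2-vector, it lies in the `k`-chordal locus of the Grassmannian `Gr(2,n)`. -/
theorem alternating_rank_le_iff_sum_decomposable {K : Type*} [Field K] {n : ℕ} (k : ℕ)
    (A : Matrix (Fin n) (Fin n) K) (hskew : Aᵀ = -A) (hdiag : ∀ i, A i i = 0) :
    A.rank ≤ 2 * k ↔
      ∃ u w : Fin k → (Fin n → K),
        A = ∑ s : Fin k, (Matrix.vecMulVec (u s) (w s) - Matrix.vecMulVec (w s) (u s)) := by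
  constructor
  · exact key_ind k A hskew hdiag
  · rintro ⟨u, w, rfl⟩
    set T : Submodule K (Fin n → K) :=
      Submodule.span K (Set.range (Sum.elim u w : Fin k ⊕ Fin k → Fin n → K)) with hT
    have hmem : ∀ s, u s ∈ T ∧ w s ∈ T := fun s =>
      ⟨Submodule.subset_span ⟨Sum.inl s, rfl⟩, Submodule.subset_span ⟨Sum.inr s, rfl⟩⟩
    have hrange : LinearMap.range
        (∑ s : Fin k, (Matrix.vecMulVec (u s) (w s) - Matrix.vecMulVec (w s) (u s))).mulVecLin
        ≤ T := by
      rintro x ⟨y, rfl⟩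
      rw [Matrix.mulVecLin_apply, _root_.sum_mulVec]
      refine Submodule.sum_mem _ fun s _ => ?_
      rw [sub_mulVec, vmv_mulVec, vmv_mulVec]
      exact Submodule.sub_mem _ (Submodule.smul_mem _ _ (hmem s).1)
        (Submodule.smul_mem _ _ (hmem s).2)
    calc (∑ s : Fin k, (Matrix.vecMulVec (u s) (w s) - Matrix.vecMulVec (w s) (u s))).rank
        ≤ Module.finrank K T := Submodule.finrank_mono hrange
      _ ≤ Fintype.card (Fin k ⊕ Fin k) := finrank_range_le_card _
      _ = 2 * k := by simp [Fintype.card_sum]; ring
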